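/- Let D ⊆ ℂ be open, connected, and invariant under complex conjugation, and let f : Ω_D → X be a right slice regular function with values in a Banach two-sided A-module X. If f(q) = 0 for all q ∈ Ω_D ∩ ℝ, then f is identically zero on Ω_D. -/

import Mathlib

open MulOpposite ComplexConjugate

/-- The imaginary sphere of a real *-algebra: `{q : q^c = -q, q² = -1}`. -/
def SA (A : Type*) [Ring A] [StarRing A] : Set A := {q | star q = -q ∧ q ^ 2 = -1}

/-- The slice embedding `φ_j : ℂ → ℂ_j`, `φ_j(r + s i) = r + s·j`. -/
def phi {A : Type*} [Ring A] [Algebra ℝ A] (j : A) (z : ℂ) : A :=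
  algebraMap ℝ A z.re + z.im • j

/-- The circular set `Ω_D = ⋃_{j ∈ S_A} φ_j(D)`. -/
def OmegaD (A : Type*) [Ring A] [Algebra ℝ A] [StarRing A] (D : Set ℂ) : Set A :=
  {q | ∃ z ∈ D, ∃ j ∈ SA A, q = phi j z}

/-- Auxiliary: a pair of real-differentiable functions satisfying the CR system yields,
after applying a real functional, a complex-differentiable function. -/
lemma auxKey {X : Type*} [NormedAddCommGroup X] [NormedSpace ℝ X]
    {F₁ F₂ : ℂ → X} {D : Set ℂ} (hDopen : IsOpen D)
    (hdiff₁ : DifferentiableOn ℝ F₁ D) (hdiff₂ : DifferentiableOn ℝ F₂ D)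
    (hCR₁ : ∀ z ∈ D, fderiv ℝ F₁ z 1 = fderiv ℝ F₂ z Complex.I)
    (hCR₂ : ∀ z ∈ D, fderiv ℝ F₁ z Complex.I = -(fderiv ℝ F₂ z 1))
    (ℓ : X →L[ℝ] ℝ) :
    DifferentiableOn ℂ (fun z => (ℓ (F₁ z) : ℂ) + (ℓ (F₂ z) : ℂ) * Complex.I) D := by
  set g : ℂ → ℂ := fun z => (ℓ (F₁ z) : ℂ) + (ℓ (F₂ z) : ℂ) * Complex.I with hg
  intro z hz
  have h₁ : DifferentiableAt ℝ F₁ z := (hdiff₁ z hz).differentiableAt (hDopen.mem_nhds hz)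
  have h₂ : DifferentiableAt ℝ F₂ z := (hdiff₂ z hz).differentiableAt (hDopen.mem_nhds hz)
  set L₁ := fderiv ℝ F₁ z with hL₁
  set L₂ := fderiv ℝ F₂ z with hL₂
  set M₁ : X →L[ℝ] ℂ := ℓ.smulRight (1 : ℂ) with hM₁
  set M₂ : X →L[ℝ] ℂ := ℓ.smulRight (Complex.I) with hM₂
  have hgreal : HasFDerivAt g (M₁.comp L₁ + M₂.comp L₂) z := by
    have e₁ : HasFDerivAt (fun z => M₁ (F₁ z)) (M₁.comp L₁) z :=
      M₁.hasFDerivAt.comp z h₁.hasFDerivAt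
    have e₂ : HasFDerivAt (fun z => M₂ (F₂ z)) (M₂.comp L₂) z :=
      M₂.hasFDerivAt.comp z h₂.hasFDerivAt
    have := e₁.add e₂
    convert this using 2 with w
    · rfl
    · rfl
    simp [hg, hM₁, hM₂, Complex.real_smul]
    rfl
  have hdr : DifferentiableAt ℝ g z := hgreal.differentiableAt
  rw [DifferentiableWithinAt]
  have : DifferentiableAt ℂ g z := by
    rw [differentiableAt_iff_restrictScalars ℝ hdr]
    set c : ℂ := (ℓ (L₁ 1) : ℂ) + (ℓ (L₂ 1) : ℂ) * Complex.I with hc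
    refine ⟨c • (1 : ℂ →L[ℂ] ℂ), ?_⟩
    rw [hgreal.fderiv]
    ext w
    have hw : w = w.re • (1 : ℂ) + w.im • Complex.I := by
      rw [Complex.real_smul, Complex.real_smul, mul_one, Complex.re_add_im]
    have hw₁ : L₁ w = w.re • L₁ 1 + w.im • L₁ Complex.I := by
      conv_lhs => rw [hw]
      rw [map_add, map_smul, map_smul]
    have hw₂ : L₂ w = w.re • L₂ 1 + w.im • L₂ Complex.I := by
      conv_lhs => rw [hw]
      rw [map_add, map_smul, map_smul]
    have cr1 : L₁ 1 = L₂ Complex.I := hCR₁ z hz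
    have cr2 : L₁ Complex.I = -(L₂ 1) := hCR₂ z hz
    simp only [ContinuousLinearMap.coe_restrictScalars', ContinuousLinearMap.smul_apply,
      ContinuousLinearMap.one_apply, ContinuousLinearMap.add_apply,
      ContinuousLinearMap.coe_comp', Function.comp_apply, hw₁, hw₂, cr2, ← cr1,
      map_add, map_smul, map_neg, hM₁, hM₂, ContinuousLinearMap.smulRight_apply,
      smul_eq_mul, hc]
    conv_lhs => rw [hw]
    simp only [Complex.real_smul, smul_neg, smul_eq_mul]
    ring_nf
    simp only [Complex.I_sq]
    ring
  exact this.differentiableWithinAt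

/-- A right slice regular function (induced by the holomorphic stem function `(F₁, F₂)`,
i.e. `(F₁,F₂)` is real-differentiable and satisfies the Cauchy–Riemann-type system
`∂F₁/∂r = ∂F₂/∂s`, `∂F₁/∂s = -∂F₂/∂r`) on a connected circular domain which vanishes on
`Ω_D ∩ ℝ` vanishes identically. -/
theorem stmt12 {A : Type*} [Ring A] [Algebra ℝ A] [StarRing A] [StarModule ℝ A]
    [FiniteDimensional ℝ A] [Nontrivial A]
    {X : Type*} [NormedAddCommGroup X] [NormedSpace ℝ X] [CompleteSpace X]
    [Module A X] [Module Aᵐᵒᵖ X]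
    (D : Set ℂ) (hDopen : IsOpen D) (hDconn : IsConnected D)
    (hDconj : ∀ z ∈ D, conj z ∈ D)
    (f : A → X) (F₁ F₂ : ℂ → X)
    (hF₁ : ∀ z, F₁ (conj z) = F₁ z) (hF₂ : ∀ z, F₂ (conj z) = -F₂ z)
    (hf : ∀ z ∈ D, ∀ j ∈ SA A, f (phi j z) = F₁ z + op j • F₂ z)
    (hdiff₁ : DifferentiableOn ℝ F₁ D) (hdiff₂ : DifferentiableOn ℝ F₂ D)
    (hCR₁ : ∀ z ∈ D, fderiv ℝ F₁ z 1 = fderiv ℝ F₂ z Complex.I)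
    (hCR₂ : ∀ z ∈ D, fderiv ℝ F₁ z Complex.I = -(fderiv ℝ F₂ z 1))
    (hzero : ∀ r : ℝ, algebraMap ℝ A r ∈ OmegaD A D → f (algebraMap ℝ A r) = 0) :
    ∀ q ∈ OmegaD A D, f q = 0 := by
  rintro q ⟨z, hzD, j, hj, rfl⟩
  -- F₂ vanishes at real points
  have hF₂real : ∀ r : ℝ, F₂ (r : ℂ) = 0 := by
    intro r
    have h := hF₂ (r : ℂ)
    rw [Complex.conj_ofReal] at h
    have h2 : F₂ (r : ℂ) + F₂ (r : ℂ) = 0 := by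
      nth_rewrite 1 [h]; exact neg_add_cancel _
    have : (2 : ℝ) • F₂ (r : ℂ) = 0 := by rw [two_smul]; exact h2
    simpa using (smul_eq_zero.mp this).resolve_left (by norm_num)
  -- phi j of a real point is algebraMap
  have hphi_real : ∀ r : ℝ, phi j (r : ℂ) = algebraMap ℝ A r := by
    intro r; simp [phi]
  -- F₁ vanishes at real points of D
  have hF₁real : ∀ r : ℝ, (r : ℂ) ∈ D → F₁ (r : ℂ) = 0 := by
    intro r hr
    have hmem : algebraMap ℝ A r ∈ OmegaD A D := ⟨(r : ℂ), hr, j, hj, (hphi_real r).symm⟩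
    have := hf (r : ℂ) hr j hj
    rw [hphi_real r, hzero r hmem, hF₂real r, smul_zero, add_zero] at this
    exact this.symm
  -- D contains a real point
  obtain ⟨r₀, hr₀⟩ : ∃ r : ℝ, (r : ℂ) ∈ D := by
    by_contra hcon
    push_neg at hcon
    have him : ∀ w ∈ D, w.im ≠ 0 := by
      intro w hw h0
      exact hcon w.re (by rwa [show (w.re : ℂ) = w by exact Complex.ext rfl h0.symm])
    obtain ⟨z₀, hz₀⟩ := hDconn.nonempty
    set u : Set ℂ := {w | 0 < w.im} with hu
    set v : Set ℂ := {w | w.im < 0} with hv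
    have hou : IsOpen u := isOpen_lt continuous_const Complex.continuous_im
    have hov : IsOpen v := isOpen_lt Complex.continuous_im continuous_const
    have hsub : D ⊆ u ∪ v := by
      intro w hw
      rcases lt_or_gt_of_ne (him w hw) with h | h
      · exact Or.inr h
      · exact Or.inl h
    have hne : ∀ w ∈ D, (D ∩ u).Nonempty ∧ (D ∩ v).Nonempty ∨ True := fun _ _ => Or.inr trivial
    have hDu : (D ∩ u).Nonempty := by
      rcases lt_or_gt_of_ne (him z₀ hz₀) with h | h
      · exact ⟨conj z₀, hDconj z₀ hz₀, by simp [hu, Complex.conj_im]; linarith⟩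
      · exact ⟨z₀, hz₀, h⟩
    have hDv : (D ∩ v).Nonempty := by
      rcases lt_or_gt_of_ne (him z₀ hz₀) with h | h
      · exact ⟨z₀, hz₀, h⟩
      · exact ⟨conj z₀, hDconj z₀ hz₀, by simp [hv, Complex.conj_im]; linarith⟩
    obtain ⟨w, -, hw1, hw2⟩ := hDconn.isPreconnected u v hou hov hsub hDu hDv
    simp only [hu, hv, Set.mem_setOf_eq] at hw1 hw2
    linarith
  -- each dual functional kills F₁ z and F₂ z
  have hkey : ∀ ℓ : X →L[ℝ] ℝ, ℓ (F₁ z) = 0 ∧ ℓ (F₂ z) = 0 := by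
    intro ℓ
    set g : ℂ → ℂ := fun w => (ℓ (F₁ w) : ℂ) + (ℓ (F₂ w) : ℂ) * Complex.I with hg
    have hgd : DifferentiableOn ℂ g D := auxKey hDopen hdiff₁ hdiff₂ hCR₁ hCR₂ ℓ
    have hga : AnalyticOnNhd ℂ g D := hgd.analyticOnNhd hDopen
    -- g vanishes frequently near r₀
    have hfreq : ∃ᶠ w in nhdsWithin (r₀ : ℂ) {(r₀ : ℂ)}ᶜ, g w = 0 := by
      set un : ℕ → ℂ := fun n => ((r₀ + 1 / (n + 1) : ℝ) : ℂ) with hun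
      have htends : Filter.Tendsto un Filter.atTop (nhds (r₀ : ℂ)) := by
        have : Filter.Tendsto (fun n : ℕ => (r₀ + 1 / (n + 1) : ℝ)) Filter.atTop (nhds r₀) := by
          have := tendsto_one_div_add_atTop_nhds_zero_nat (𝕜 := ℝ)
          have h2 := this.const_add r₀
          simpa using h2
        exact (Complex.continuous_ofReal.tendsto r₀).comp this
      have hne : ∀ n, un n ≠ (r₀ : ℂ) := by
        intro n
        simp only [hun, ne_eq, Complex.ofReal_inj]
        intro h
        have : (1 : ℝ) / (n + 1) = 0 := by linarith
        have hpos : (0:ℝ) < 1 / (n + 1) := by positivity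
        linarith
      have htends' : Filter.Tendsto un Filter.atTop (nhdsWithin (r₀ : ℂ) {(r₀ : ℂ)}ᶜ) := by
        rw [nhdsWithin]
        exact Filter.tendsto_inf.mpr ⟨htends,
          Filter.tendsto_principal.mpr (Filter.Eventually.of_forall fun n => hne n)⟩
      have hev : ∀ᶠ n in Filter.atTop, g (un n) = 0 := by
        have hmemD : ∀ᶠ n in Filter.atTop, un n ∈ D :=
          htends.eventually (hDopen.mem_nhds hr₀)
        filter_upwards [hmemD] with n hn
        have h1 : F₁ (un n) = 0 := hF₁real _ hn
        have h2 : F₂ (un n) = 0 := hF₂real _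
        simp [hg, h1, h2]
      exact htends'.frequently hev.frequently
    have hEq := hga.eqOn_zero_of_preconnected_of_frequently_eq_zero
      hDconn.isPreconnected hr₀ hfreq
    have hgz : g z = 0 := hEq hzD
    have hre := congrArg Complex.re hgz
    have him := congrArg Complex.im hgz
    simp [hg] at hre him
    exact ⟨hre, him⟩
  have hF₁z : F₁ z = 0 :=
    NormedSpace.eq_zero_of_forall_dual_eq_zero ℝ fun ℓ => (hkey ℓ).1
  have hF₂z : F₂ z = 0 :=
    NormedSpace.eq_zero_of_forall_dual_eq_zero ℝ fun ℓ => (hkey ℓ).2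
  rw [hf z hzD j hj, hF₁z, hF₂z, smul_zero, add_zero]
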